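/- Each step of the mix-elimination procedure for the sequent system 𝒥 preserves the translation t into the free bicartesian closed category ℬ: if a proof π is transformed into a proof π′ by one reduction step of the procedure, then t(π) = t(π′) holds in ℬ. -/

import Mathlib

namespace JSys

/-! ### The sequent system `𝒥` for intuitionistic propositional logic -/

/-- formulae, generated from a countable set of propositional letters by `⊤`, `⊥`,
`∧`, `∨`, `→` -/
inductive Fml : Type
  | pl : ℕ → Fml
  | top : Fml
  | bot : Fml
  | and : Fml → Fml → Fml
  | or : Fml → Fml → Fml
  | imp : Fml → Fml → Fml
deriving DecidableEq

/-- `∧`-contexts -/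
inductive Ctx : Type
  | box : Ctx
  | conL : Ctx → Fml → Ctx
  | conR : Fml → Ctx → Ctx
  | conB : Ctx → Ctx → Ctx

/-- substitution of a formula for every occurrence of `□` in a `∧`-context -/
def Ctx.fill : Ctx → Fml → Fml
  | .box, A => A
  | .conL G B, A => (G.fill A).and B
  | .conR B G, A => B.and (G.fill A)
  | .conB G H, A => (G.fill A).and (H.fill A)

/-- the number of occurrences of `□` in a `∧`-context; a `∧₁`-context is a
`∧`-context `F` with `F.boxes = 1` -/
def Ctx.boxes : Ctx → ℕ
  | .box => 1
  | .conL G _ => G.boxes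
  | .conR _ G => G.boxes
  | .conB G H => G.boxes + H.boxes

/-- substitution of a `∧`-context for every occurrence of `□` in a `∧`-context -/
def Ctx.subst : Ctx → Ctx → Ctx
  | .box, K => K
  | .conL G A, K => .conL (G.subst K) A
  | .conR A G, K => .conR A (G.subst K)
  | .conB G H, K => .conB (G.subst K) (H.subst K)

theorem Ctx.subst_fill (G K : Ctx) (X : Fml) :
    (G.subst K).fill X = G.fill (K.fill X) := by
  induction G <;> simp [Ctx.subst, Ctx.fill, *]

/-- Proofs of the sequent system `𝒥`.  A proof of the sequent `A ⊢ B` is a term of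
type `JPf A B`.  The axioms are `a_A : A ⊢ A` and `Π_A : ⊥ ⊢ A`; the structural
rules (for `∧₁`-contexts `F`, witnessed by `F.boxes = 1`) are the two associativity
rules, commutativity `γ`, contraction `ω`, thinning `θ`, the unit rules `τ`, `τⁱ`,
and mix (for an arbitrary `∧`-context `G`); the rules for the connectives are `(∧)`,
`(◇)`, the two right `∨`-introductions, `(∗)` and `(▷)`. -/
inductive JPf : Fml → Fml → Type
  | ax (A : Fml) : JPf A A
  | exf (A : Fml) : JPf .bot A
  /-- `(β^→_F)`: from `F((A∧B)∧C) ⊢ D` infer `F(A∧(B∧C)) ⊢ D` -/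
  | bA (F : Ctx) (hF : F.boxes = 1) {A B C D : Fml} :
      JPf (F.fill ((A.and B).and C)) D → JPf (F.fill (A.and (B.and C))) D
  /-- `(β^←_F)`: from `F(A∧(B∧C)) ⊢ D` infer `F((A∧B)∧C) ⊢ D` -/
  | bB (F : Ctx) (hF : F.boxes = 1) {A B C D : Fml} :
      JPf (F.fill (A.and (B.and C))) D → JPf (F.fill ((A.and B).and C)) D
  /-- `(γ_F)` -/
  | perm (F : Ctx) (hF : F.boxes = 1) {A B C : Fml} :
      JPf (F.fill (A.and B)) C → JPf (F.fill (B.and A)) C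
  /-- `(ω_F)` -/
  | contr (F : Ctx) (hF : F.boxes = 1) {A B : Fml} :
      JPf (F.fill (A.and A)) B → JPf (F.fill A) B
  /-- `(θ^A_F)` -/
  | thin (F : Ctx) (hF : F.boxes = 1) (A : Fml) {B : Fml} :
      JPf (F.fill .top) B → JPf (F.fill A) B
  /-- `(τ_F)` -/
  | unitI (F : Ctx) (hF : F.boxes = 1) {A B : Fml} :
      JPf (F.fill A) B → JPf (F.fill (A.and .top)) B
  /-- `(τⁱ_F)` -/
  | unitE (F : Ctx) (hF : F.boxes = 1) {A B : Fml} :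
      JPf (F.fill (A.and .top)) B → JPf (F.fill A) B
  /-- mix -/
  | mix (G : Ctx) {A B C : Fml} : JPf A B → JPf (G.fill B) C → JPf (G.fill A) C
  /-- `(∧)` -/
  | andI {A B C D : Fml} : JPf A C → JPf B D → JPf (A.and B) (C.and D)
  /-- `(◇)` -/
  | orE {A B C D : Fml} : JPf (A.and C) D → JPf (B.and C) D → JPf ((A.or B).and C) D
  /-- `(∨ r₁)` -/
  | orI1 {A B : Fml} (C : Fml) : JPf A B → JPf A (B.or C)
  /-- `(∨ r₂)` -/
  | orI2 {A C : Fml} (B : Fml) : JPf A C → JPf A (B.or C)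
  /-- `(∗)` -/
  | star {A B C : Fml} : JPf (A.and B) C → JPf B (A.imp C)
  /-- `(▷)` -/
  | tri {A B C D E : Fml} : JPf A B → JPf (C.and D) E → JPf ((A.and (B.imp C)).and D) E

/-- a proof is mixless iff it contains no application of the rule mix -/
def MixFree : ∀ {A B : Fml}, JPf A B → Prop
  | _, _, .ax _ => True
  | _, _, .exf _ => True
  | _, _, .bA _ _ π => MixFree π
  | _, _, .bB _ _ π => MixFree π
  | _, _, .perm _ _ π => MixFree π
  | _, _, .contr _ _ π => MixFree π
  | _, _, .thin _ _ _ π => MixFree π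
  | _, _, .unitI _ _ π => MixFree π
  | _, _, .unitE _ _ π => MixFree π
  | _, _, .mix _ _ _ => False
  | _, _, .andI π₁ π₂ => MixFree π₁ ∧ MixFree π₂
  | _, _, .orE π₁ π₂ => MixFree π₁ ∧ MixFree π₂
  | _, _, .orI1 _ π => MixFree π
  | _, _, .orI2 _ π => MixFree π
  | _, _, .star π => MixFree π
  | _, _, .tri π₁ π₂ => MixFree π₁ ∧ MixFree π₂

/-! ### The free bicartesian closed category `ℬ` -/

/-- objects of the free bicartesian closed category, generated from the
propositional letters -/
inductive Obj : Type
  | pl : ℕ → Obj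
  | unit : Obj
  | zero : Obj
  | prod : Obj → Obj → Obj
  | coprod : Obj → Obj → Obj
  | exp : Obj → Obj → Obj
deriving DecidableEq

/-- Morphism terms of the free bicartesian closed category, generated from the
special morphisms by the operations `×`, `+`, `⇒` and `∘` (the latter written in
diagrammatic order as `comp`).  Here `d = d_A : A×I → A`, `dInv = dⁱ_A`,
`assocR = b^→`, `assocL = b^←`, `braid = c`, `diag = w`, `bang = k`, `codiag = m`,
`exf = λ`, `inl = λ¹`, `inr = λ²`, `ev = ε`, `coev = η`. -/
inductive Mor : Obj → Obj → Type
  | id (A : Obj) : Mor A A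
  | comp {A B C : Obj} : Mor A B → Mor B C → Mor A C
  | d (A : Obj) : Mor (A.prod .unit) A
  | dInv (A : Obj) : Mor A (A.prod .unit)
  | assocR (A B C : Obj) : Mor (A.prod (B.prod C)) ((A.prod B).prod C)
  | assocL (A B C : Obj) : Mor ((A.prod B).prod C) (A.prod (B.prod C))
  | braid (A B : Obj) : Mor (A.prod B) (B.prod A)
  | diag (A : Obj) : Mor A (A.prod A)
  | bang (A : Obj) : Mor A .unit
  | codiag (A : Obj) : Mor (A.coprod A) A
  | exf (A : Obj) : Mor .zero A
  | inl (A B : Obj) : Mor A (A.coprod B)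
  | inr (A B : Obj) : Mor B (A.coprod B)
  | ev (A B : Obj) : Mor (A.prod (A.exp B)) B
  | coev (A B : Obj) : Mor B (A.exp (A.prod B))
  | pr {A B C D : Obj} : Mor A B → Mor C D → Mor (A.prod C) (B.prod D)
  | co {A B C D : Obj} : Mor A B → Mor C D → Mor (A.coprod C) (B.coprod D)
  | ex {A B C D : Obj} : Mor A B → Mor C D → Mor (B.exp C) (A.exp D)

namespace Mor

/-- the middle part of the canonical transformation `c^m` -/
def cmMid (B C D : Obj) : Mor (B.prod (C.prod D)) (C.prod (B.prod D)) :=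
  .comp (.assocR B C D) (.comp (.pr (.braid B C) (.id D)) (.assocL C B D))

/-- the canonical transformation
`c^m_{A,B,C,D} = b^→_{A,C,B×D} ∘ (1_A × (b^←_{C,B,D} ∘ (c_{B,C} × 1_D) ∘ b^→_{B,C,D})) ∘ b^←_{A,B,C×D}` -/
def cm (A B C D : Obj) : Mor ((A.prod B).prod (C.prod D)) ((A.prod C).prod (B.prod D)) :=
  .comp (.assocL A B (C.prod D)) (.comp (.pr (.id A) (cmMid B C D)) (.assocR A C (B.prod D)))

end Mor

/-- The bicartesian closed equations between morphism terms: the congruence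
generated by the equations of Section 1 of the paper. -/
inductive BEq : ∀ {A B : Obj}, Mor A B → Mor A B → Prop
  | refl {A B} (f : Mor A B) : BEq f f
  | symm {A B} {f g : Mor A B} : BEq f g → BEq g f
  | trans {A B} {f g h : Mor A B} : BEq f g → BEq g h → BEq f h
  | comp_congr {A B C} {f f' : Mor A B} {g g' : Mor B C} :
      BEq f f' → BEq g g' → BEq (.comp f g) (.comp f' g')
  | pr_congr {A B C D} {f f' : Mor A B} {g g' : Mor C D} :
      BEq f f' → BEq g g' → BEq (.pr f g) (.pr f' g')
  | co_congr {A B C D} {f f' : Mor A B} {g g' : Mor C D} :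
      BEq f f' → BEq g g' → BEq (.co f g) (.co f' g')
  | ex_congr {A B C D} {f f' : Mor A B} {g g' : Mor C D} :
      BEq f f' → BEq g g' → BEq (.ex f g) (.ex f' g')
  -- (cat 1), (cat 2)
  | id_left {A B} (f : Mor A B) : BEq (.comp (.id A) f) f
  | id_right {A B} (f : Mor A B) : BEq (.comp f (.id B)) f
  | assoc {A B C D} (f : Mor A B) (g : Mor B C) (h : Mor C D) :
      BEq (.comp (.comp f g) h) (.comp f (.comp g h))
  -- (× 1), (× 2)
  | prod_id (A B : Obj) : BEq (.pr (.id A) (.id B)) (.id (A.prod B))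
  | prod_comp {A B C A' B' C'} (f₁ : Mor A B) (f₂ : Mor B C) (g₁ : Mor A' B') (g₂ : Mor B' C') :
      BEq (.pr (.comp f₁ f₂) (.comp g₁ g₂)) (.comp (.pr f₁ g₁) (.pr f₂ g₂))
  -- (d)
  | d_nat {A B} (f : Mor A B) :
      BEq (.comp (.d A) f) (.comp (.pr f (.id .unit)) (.d B))
  -- (d dⁱ)
  | d_dInv (A : Obj) : BEq (.comp (.dInv A) (.d A)) (.id A)
  | dInv_d (A : Obj) : BEq (.comp (.d A) (.dInv A)) (.id (A.prod .unit))
  -- (d c)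
  | d_braid : BEq (.comp (.braid .unit .unit) (.d .unit)) (.d .unit)
  -- (b)
  | b_nat {A B C D E F'} (f : Mor A D) (g : Mor B E) (h : Mor C F') :
      BEq (.comp (.assocR A B C) (.pr (.pr f g) h))
          (.comp (.pr f (.pr g h)) (.assocR D E F'))
  -- (b b)
  | bR_bL (A B C : Obj) :
      BEq (.comp (.assocL A B C) (.assocR A B C)) (.id ((A.prod B).prod C))
  | bL_bR (A B C : Obj) :
      BEq (.comp (.assocR A B C) (.assocL A B C)) (.id (A.prod (B.prod C)))
  -- (b 5)
  | b5 (A B C D : Obj) :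
      BEq (.comp (.assocR A B (C.prod D)) (.assocR (A.prod B) C D))
          (.comp (.pr (.id A) (.assocR B C D))
            (.comp (.assocR A (B.prod C) D) (.pr (.assocR A B C) (.id D))))
  -- (c)
  | c_nat {A B C D} (f : Mor A C) (g : Mor B D) :
      BEq (.comp (.braid A B) (.pr g f)) (.comp (.pr f g) (.braid C D))
  -- (c c)
  | c_c (A B : Obj) : BEq (.comp (.braid A B) (.braid B A)) (.id (A.prod B))
  -- (b c d)
  | bcd (A B : Obj) :
      BEq (.comp (.assocR A .unit B) (.pr (.d A) (.id B)))
          (.pr (.id A) (.comp (.braid .unit B) (.d B)))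
  -- (b c 6)
  | bc6 (A B C : Obj) :
      BEq (.comp (.assocR A B C) (.comp (.braid (A.prod B) C) (.assocR C A B)))
          (.comp (.pr (.id A) (.braid B C))
            (.comp (.assocR A C B) (.pr (.braid A C) (.id B))))
  -- (w)
  | w_nat {A B} (f : Mor A B) :
      BEq (.comp (.diag A) (.pr f f)) (.comp f (.diag B))
  -- (d w)
  | d_w : BEq (.comp (.diag .unit) (.d .unit)) (.id .unit)
  -- (b w)
  | b_w (A : Obj) :
      BEq (.comp (.diag A) (.comp (.pr (.id A) (.diag A)) (.assocR A A A)))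
          (.comp (.diag A) (.pr (.diag A) (.id A)))
  -- (c w)
  | c_w (A : Obj) : BEq (.comp (.diag A) (.braid A A)) (.diag A)
  -- (b c w 8)
  | bcw8 (A B : Obj) :
      BEq (.comp (.diag (A.prod B)) (Mor.cm A B A B)) (.pr (.diag A) (.diag B))
  -- (k)
  | k_unique {A} (f : Mor A .unit) : BEq f (.bang A)
  -- (d k w)
  | dkw (A : Obj) :
      BEq (.comp (.diag A) (.comp (.pr (.id A) (.bang A)) (.d A))) (.id A)
  -- (+ 1), (+ 2)
  | coprod_id (A B : Obj) : BEq (.co (.id A) (.id B)) (.id (A.coprod B))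
  | coprod_comp {A B C A' B' C'} (f₁ : Mor A B) (f₂ : Mor B C) (g₁ : Mor A' B') (g₂ : Mor B' C') :
      BEq (.co (.comp f₁ f₂) (.comp g₁ g₂)) (.comp (.co f₁ g₁) (.co f₂ g₂))
  -- (λ¹), (λ²)
  | inl_nat {A₁ A₂ B₁ B₂} (f₁ : Mor A₁ B₁) (f₂ : Mor A₂ B₂) :
      BEq (.comp (.inl A₁ A₂) (.co f₁ f₂)) (.comp f₁ (.inl B₁ B₂))
  | inr_nat {A₁ A₂ B₁ B₂} (f₁ : Mor A₁ B₁) (f₂ : Mor A₂ B₂) :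
      BEq (.comp (.inr A₁ A₂) (.co f₁ f₂)) (.comp f₂ (.inr B₁ B₂))
  -- (λ)
  | exf_unique {A} (f : Mor .zero A) : BEq f (.exf A)
  -- (m)
  | m_nat {A B} (f : Mor A B) :
      BEq (.comp (.codiag A) f) (.comp (.co f f) (.codiag B))
  -- (λ m 1)
  | m_inl (A : Obj) : BEq (.comp (.inl A A) (.codiag A)) (.id A)
  | m_inr (A : Obj) : BEq (.comp (.inr A A) (.codiag A)) (.id A)
  -- (λ m 2)
  | m_inl_inr (A B : Obj) :
      BEq (.comp (.co (.inl A B) (.inr A B)) (.codiag (A.coprod B))) (.id (A.coprod B))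
  -- (⇒ 1), (⇒ 2)
  | exp_id (A B : Obj) : BEq (.ex (.id A) (.id B)) (.id (A.exp B))
  | exp_comp {A B' B C D' D} (g₁ : Mor B' B) (g₂ : Mor A B') (f₁ : Mor D' D) (f₂ : Mor C D') :
      BEq (.ex (.comp g₂ g₁) (.comp f₂ f₁)) (.comp (.ex g₁ f₂) (.ex g₂ f₁))
  -- (ε 1)
  | eps1 {A B C} (f : Mor A B) :
      BEq (.comp (.ev C A) f) (.comp (.pr (.id C) (.ex (.id C) f)) (.ev C B))
  -- (η 1)
  | eta1 {A B C} (f : Mor A B) :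
      BEq (.comp (.coev C A) (.ex (.id C) (.pr (.id C) f))) (.comp f (.coev C B))
  -- (ε 2)
  | eps2 {A B C} (f : Mor A B) :
      BEq (.comp (.pr f (.ex (.id B) (.id C))) (.ev B C))
          (.comp (.pr (.id A) (.ex f (.id C))) (.ev A C))
  -- (η 2)
  | eta2 {A B C} (f : Mor A B) :
      BEq (.comp (.coev B C) (.ex f (.pr (.id B) (.id C))))
          (.comp (.coev A C) (.ex (.id A) (.pr f (.id C))))
  -- (1 ε η)
  | triangle1 (A B : Obj) :
      BEq (.comp (.coev A (A.exp B)) (.ex (.id A) (.ev A B))) (.id (A.exp B))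
  -- (ε 1 η)
  | triangle2 (A B : Obj) :
      BEq (.comp (.pr (.id A) (.coev A B)) (.ev A (A.prod B))) (.id (A.prod B))

/-! ### The translations `t` and `t′` -/

/-- the translation of formulae into objects of `ℬ` -/
def tF : Fml → Obj
  | .pl i => .pl i
  | .top => .unit
  | .bot => .zero
  | .and A B => (tF A).prod (tF B)
  | .or A B => (tF A).coprod (tF B)
  | .imp A B => (tF A).exp (tF B)

/-- the functor (acting on morphism terms) extracted from a `∧`-context -/
def mapCtx : (F : Ctx) → {X Y : Fml} → Mor (tF X) (tF Y) →
    Mor (tF (F.fill X)) (tF (F.fill Y))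
  | .box, _, _, g => g
  | .conL G A, _, _, g => .pr (mapCtx G g) (.id (tF A))
  | .conR A G, _, _, g => .pr (.id (tF A)) (mapCtx G g)
  | .conB G H, _, _, g => .pr (mapCtx G g) (mapCtx H g)

/-- the canonical distributivity morphism
`ξ_{X,Y,Z} = ε ∘ (1_X × (m ∘ ((1_X ⇒ λ¹) ∘ η + (1_X ⇒ λ²) ∘ η))) : X×(Y+Z) → (X×Y)+(X×Z)` -/
def xiM (X Y Z : Obj) : Mor (X.prod (Y.coprod Z)) ((X.prod Y).coprod (X.prod Z)) :=
  .comp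
    (.pr (.id X)
      (.comp
        (.co (.comp (.coev X Y) (.ex (.id X) (.inl (X.prod Y) (X.prod Z))))
             (.comp (.coev X Z) (.ex (.id X) (.inr (X.prod Y) (X.prod Z)))))
        (.codiag (X.exp ((X.prod Y).coprod (X.prod Z))))))
    (.ev X ((X.prod Y).coprod (X.prod Z)))

/-- the translation `t` of `𝒥`-proofs into morphism terms of `ℬ` -/
def tP : ∀ {A B : Fml}, JPf A B → Mor (tF A) (tF B)
  | _, _, .ax A => .id (tF A)
  | _, _, .exf A => .exf (tF A)
  | _, _, .bA F _ (A := A) (B := B) (C := C) π =>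
      .comp (mapCtx F (X := A.and (B.and C)) (Y := (A.and B).and C)
        (.assocR (tF A) (tF B) (tF C))) (tP π)
  | _, _, .bB F _ (A := A) (B := B) (C := C) π =>
      .comp (mapCtx F (X := (A.and B).and C) (Y := A.and (B.and C))
        (.assocL (tF A) (tF B) (tF C))) (tP π)
  | _, _, .perm F _ (A := A) (B := B) π =>
      .comp (mapCtx F (X := B.and A) (Y := A.and B) (.braid (tF B) (tF A))) (tP π)
  | _, _, .contr F _ (A := A) π =>
      .comp (mapCtx F (X := A) (Y := A.and A) (.diag (tF A))) (tP π)
  | _, _, .thin F _ A π => .comp (mapCtx F (X := A) (Y := Fml.top) (.bang (tF A))) (tP π)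
  | _, _, .unitI F _ (A := A) π => .comp (mapCtx F (X := A.and Fml.top) (Y := A) (.d (tF A))) (tP π)
  | _, _, .unitE F _ (A := A) π => .comp (mapCtx F (X := A) (Y := A.and Fml.top) (.dInv (tF A))) (tP π)
  | _, _, .mix G π₁ π₂ => .comp (mapCtx G (tP π₁)) (tP π₂)
  | _, _, .andI π₁ π₂ => .pr (tP π₁) (tP π₂)
  | _, _, .orE (A := A) (B := B) (C := C) (D := D) π₁ π₂ =>
      .comp (.braid ((tF A).coprod (tF B)) (tF C))
        (.comp (xiM (tF C) (tF A) (tF B))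
          (.comp (.co (.braid (tF C) (tF A)) (.braid (tF C) (tF B)))
            (.comp (.co (tP π₁) (tP π₂)) (.codiag (tF D)))))
  | _, _, .orI1 C π => .comp (tP π) (.inl _ (tF C))
  | _, _, .orI2 B π => .comp (tP π) (.inr (tF B) _)
  | _, _, .star π => .comp (.coev _ _) (.ex (.id _) (tP π))
  | _, _, .tri (B := Bf) (C := Cf) π₁ π₂ =>
      .comp (.pr (.comp (.pr (tP π₁) (.id ((tF Bf).exp (tF Cf)))) (.ev (tF Bf) (tF Cf))) (.id _))
        (tP π₂)

/-- the translation of objects of `ℬ` back into formulae (inverse to `tF`) -/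
def uF : Obj → Fml
  | .pl i => .pl i
  | .unit => .top
  | .zero => .bot
  | .prod A B => (uF A).and (uF B)
  | .coprod A B => (uF A).or (uF B)
  | .exp A B => (uF A).imp (uF B)

theorem tF_uF (X : Obj) : tF (uF X) = X := by
  induction X <;> simp [tF, uF, *]

/-- the translation `t′` of morphism terms of `ℬ` into `𝒥`-proofs -/
def uP : ∀ {X Y : Obj}, Mor X Y → JPf (uF X) (uF Y)
  | _, _, .id A => .ax (uF A)
  | _, _, .comp f g => .mix .box (uP f) (uP g)
  | _, _, .d A => .unitI .box rfl (.ax (uF A))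
  | _, _, .dInv A => .unitE .box rfl (.ax ((uF A).and .top))
  | _, _, .assocR A B C => .bA .box rfl (.ax (((uF A).and (uF B)).and (uF C)))
  | _, _, .assocL A B C => .bB .box rfl (.ax ((uF A).and ((uF B).and (uF C))))
  | _, _, .braid A B => .perm .box rfl (.ax ((uF B).and (uF A)))
  | _, _, .diag A => .contr .box rfl (.ax ((uF A).and (uF A)))
  | _, _, .bang A => .thin .box rfl (uF A) (.ax .top)
  | _, _, .codiag A => .unitE .box rfl
      (.orE (.unitI .box rfl (.ax (uF A))) (.unitI .box rfl (.ax (uF A))))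
  | _, _, .exf A => .exf (uF A)
  | _, _, .inl A B => .orI1 (uF B) (.ax (uF A))
  | _, _, .inr A B => .orI2 (uF A) (.ax (uF B))
  | _, _, .ev A B => .unitE .box rfl (.tri (.ax (uF A)) (.unitI .box rfl (.ax (uF B))))
  | _, _, .coev A B => .star (.ax ((uF A).and (uF B)))
  | _, _, .pr f g => .andI (uP f) (uP g)
  | _, _, .co (A := A) (B := Bo) (C := C) (D := D) f g => .unitE .box rfl
      (.orE (.unitI .box rfl (.orI1 (uF D) (uP f)))
            (.unitI .box rfl (.orI2 (uF Bo) (uP g))))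
  | _, _, .ex f g => .star (.unitE .box rfl (.tri (uP f) (.unitI .box rfl (uP g))))

/-! ### The mix-elimination procedure -/

/-- transport of a proof along equalities of its endpoints -/
def recast {A A' B B' : Fml} (hA : A = A') (hB : B = B') (π : JPf A B) : JPf A' B' :=
  hA ▸ hB ▸ π

/-- the image of a proof under (the proof-theoretic action of) a `∧`-context -/
def ctxAp : (G : Ctx) → {A B : Fml} → JPf A B → JPf (G.fill A) (G.fill B)
  | .box, _, _, π => π
  | .conL G C, _, _, π => .andI (ctxAp G π) (.ax C)
  | .conR C G, _, _, π => .andI (.ax C) (ctxAp G π)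
  | .conB G H, _, _, π => .andI (ctxAp G π) (ctxAp H π)

/-- the canonical mixless proof of `G(⊥) ⊢ C`, obtained from `Π_C : ⊥ ⊢ C` by
`(τ)`, `(γ)` and `(θ)` -/
def botFill : (G : Ctx) → (C : Fml) → JPf (G.fill .bot) C
  | .box, C => .exf C
  | .conL G D, C => .thin (Ctx.conR (G.fill .bot) .box) rfl D
      (.unitI .box rfl (botFill G C))
  | .conR D G, C => .thin (Ctx.conL .box (G.fill .bot)) rfl D
      (.perm .box rfl (.unitI .box rfl (botFill G C)))
  | .conB G H, C => .thin (Ctx.conR (G.fill .bot) .box) rfl (H.fill .bot)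
      (.unitI .box rfl (botFill G C))

/-- One step of the mix-elimination procedure of the paper (the local proof
transformations of the cases of the cut-elimination theorem; the cases commuting a
mix with a structural rule are instances of the schemata below applied inside the
subproofs). -/
inductive ElimStep : ∀ {A B : Fml}, JPf A B → JPf A B → Prop
  /- case 1.1.1 -/
  | e111 {B C : Fml} (G : Ctx) (π₂ : JPf (G.fill B) C) :
      ElimStep (.mix G (.ax B) π₂) π₂
  /- case 1.1.2 -/
  | e112 {A B : Fml} (G : Ctx) (π₁ : JPf A B) :
      ElimStep (.mix G π₁ (.ax (G.fill B))) (ctxAp G π₁)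
  /- case 1.1.3 -/
  | e113 {B C : Fml} (G : Ctx) (π₂ : JPf (G.fill B) C) :
      ElimStep (.mix G (.exf B) π₂) (botFill G C)
  /- case 1.1.4 -/
  | e114 {C : Fml} (π₁ : JPf .bot .bot) :
      ElimStep (.mix .box π₁ (.exf C)) (.exf C)
  /- case 1.2: `π₁` ends with `(∧)` -/
  | e12 {A₁ A₂ B₁ B₂ C : Fml} (G : Ctx) (π₁' : JPf A₁ B₁) (π₁'' : JPf A₂ B₂)
      (π₂ : JPf (G.fill (B₁.and B₂)) C) :
      ElimStep (.mix G (.andI π₁' π₁'') π₂)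
        (recast (by simp [Ctx.subst_fill, Ctx.fill]) rfl
          (.mix (G.subst (.conL .box A₂)) π₁'
            (recast (by simp [Ctx.subst_fill, Ctx.fill]) rfl
              (.mix (G.subst (.conR B₁ .box)) π₁''
                (recast (by simp [Ctx.subst_fill, Ctx.fill]) rfl π₂)))))
  /- cases 1.3.1, 1.4.1, 2.2 with `π₂` ending with `(θ)`: the mixed formula is
  introduced by thinning -/
  | e131 {A B C : Fml} (F G₁ : Ctx) (hF : F.boxes = 1) (π₁ : JPf A B)
      (π₂' : JPf (F.fill .top) C) :
      ElimStep
        (.mix (F.subst G₁) π₁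
          (recast (by simp [Ctx.subst_fill]) rfl (.thin F hF (G₁.fill B) π₂')))
        (recast (by simp [Ctx.subst_fill]) rfl (.thin F hF (G₁.fill A) π₂'))
  /- case 1.3.2: `π₁` ends with `(∗)`, `π₂` ends with `(▷)` -/
  | e132 {A B₁ B₂ D E C : Fml} (π₁' : JPf (B₁.and A) B₂) (π₂' : JPf D B₁)
      (π₂'' : JPf (B₂.and E) C) :
      ElimStep (.mix (Ctx.conL (Ctx.conR D .box) E) (.star π₁') (.tri π₂' π₂''))
        (.mix (Ctx.conL (Ctx.conL .box A) E) π₂'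
          (.mix (Ctx.conL .box E) π₁' π₂''))
  /- case 1.4.2: `π₁` ends with a right `∨`-introduction, `π₂` ends with `(◇)` -/
  | e142l {A B₁ B₂ D C : Fml} (π₁' : JPf A B₁) (π₂' : JPf (B₁.and D) C)
      (π₂'' : JPf (B₂.and D) C) :
      ElimStep (.mix (Ctx.conL .box D) (.orI1 B₂ π₁') (.orE π₂' π₂''))
        (.mix (Ctx.conL .box D) π₁' π₂')
  | e142r {A B₁ B₂ D C : Fml} (π₁' : JPf A B₂) (π₂' : JPf (B₁.and D) C)
      (π₂'' : JPf (B₂.and D) C) :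
      ElimStep (.mix (Ctx.conL .box D) (.orI2 B₁ π₁') (.orE π₂' π₂''))
        (.mix (Ctx.conL .box D) π₁' π₂'')
  /- case 2.1.2: `π₂` ends with `(∧)` -/
  | e212 {A B C₁ C₂ : Fml} (G₁ G₂ : Ctx) (π₁ : JPf A B)
      (π₂' : JPf (G₁.fill B) C₁) (π₂'' : JPf (G₂.fill B) C₂) :
      ElimStep (.mix (Ctx.conB G₁ G₂) π₁ (.andI π₂' π₂''))
        (.andI (.mix G₁ π₁ π₂') (.mix G₂ π₁ π₂''))
  /- case 2.1.3: `π₂` ends with `(∗)` -/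
  | e213 {A B C₁ C₂ : Fml} (G : Ctx) (π₁ : JPf A B)
      (π₂' : JPf (C₁.and (G.fill B)) C₂) :
      ElimStep (.mix G π₁ (.star π₂')) (.star (.mix (Ctx.conR C₁ G) π₁ π₂'))
  /- case 2.1.4.1: `π₂` ends with `(▷)`, the mixed formula being the implication -/
  | e2141 {A B₁ B₂ C : Fml} (G₁ G₂ : Ctx) (π₁ : JPf A (B₁.imp B₂))
      (π₂' : JPf (G₁.fill (B₁.imp B₂)) B₁)
      (π₂'' : JPf (B₂.and (G₂.fill (B₁.imp B₂))) C) :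
      ElimStep (.mix (Ctx.conB (Ctx.conB G₁ .box) G₂) π₁ (.tri π₂' π₂''))
        (.mix (Ctx.conL (Ctx.conR (G₁.fill A) .box) (G₂.fill A)) π₁
          (.tri (.mix G₁ π₁ π₂') (.mix (Ctx.conR B₂ G₂) π₁ π₂'')))
  /- case 2.1.4.2 -/
  | e2142 {A B₁ B₂ B₃ C : Fml} (G₁ : Ctx) (π₁ : JPf A (B₁.and (B₂.imp B₃)))
      (π₂' : JPf B₁ B₂) (π₂'' : JPf (B₃.and (G₁.fill (B₁.and (B₂.imp B₃)))) C) :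
      ElimStep (.mix (Ctx.conB .box G₁) π₁ (.tri π₂' π₂''))
        (.mix (Ctx.conL .box (G₁.fill A)) π₁
          (.tri π₂' (.mix (Ctx.conR B₃ G₁) π₁ π₂'')))
  /- case 2.1.4.3 -/
  | e2143 {A B D E C : Fml} (G₁ G₂ : Ctx) (π₁ : JPf A B)
      (π₂' : JPf (G₁.fill B) D) (π₂'' : JPf (E.and (G₂.fill B)) C) :
      ElimStep (.mix (Ctx.conB (Ctx.conL G₁ (D.imp E)) G₂) π₁ (.tri π₂' π₂''))
        (.tri (.mix G₁ π₁ π₂') (.mix (Ctx.conR E G₂) π₁ π₂''))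
  /- case 2.1.5.1: `π₂` ends with `(◇)`, the mixed formula being the disjunction -/
  | e2151 {A B₁ B₂ C : Fml} (G₁ : Ctx) (π₁ : JPf A (B₁.or B₂))
      (π₂' : JPf (B₁.and (G₁.fill (B₁.or B₂))) C)
      (π₂'' : JPf (B₂.and (G₁.fill (B₁.or B₂))) C) :
      ElimStep (.mix (Ctx.conB .box G₁) π₁ (.orE π₂' π₂''))
        (.mix (Ctx.conL .box (G₁.fill A)) π₁
          (.orE (.mix (Ctx.conR B₁ G₁) π₁ π₂') (.mix (Ctx.conR B₂ G₁) π₁ π₂'')))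
  /- case 2.1.5.2 -/
  | e2152 {A B D₁ D₂ C : Fml} (G₁ : Ctx) (π₁ : JPf A B)
      (π₂' : JPf (D₁.and (G₁.fill B)) C) (π₂'' : JPf (D₂.and (G₁.fill B)) C) :
      ElimStep (.mix (Ctx.conR (D₁.or D₂) G₁) π₁ (.orE π₂' π₂''))
        (.orE (.mix (Ctx.conR D₁ G₁) π₁ π₂') (.mix (Ctx.conR D₂ G₁) π₁ π₂''))
  /- case 2.1.6: `π₂` ends with a right `∨`-introduction -/
  | e216l {A B C₁ C₂ : Fml} (G : Ctx) (π₁ : JPf A B) (π₂' : JPf (G.fill B) C₁) :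
      ElimStep (.mix G π₁ (.orI1 C₂ π₂')) (.orI1 C₂ (.mix G π₁ π₂'))
  | e216r {A B C₁ C₂ : Fml} (G : Ctx) (π₁ : JPf A B) (π₂' : JPf (G.fill B) C₁) :
      ElimStep (.mix G π₁ (.orI2 C₂ π₂')) (.orI2 C₂ (.mix G π₁ π₂'))

/-! ### Auxiliary machinery: the quotient of morphism terms by `BEq` -/

instance morSetoid (X Y : Obj) : Setoid (Mor X Y) :=
  ⟨BEq, ⟨BEq.refl, BEq.symm, BEq.trans⟩⟩

abbrev Q (X Y : Obj) : Type := Quotient (morSetoid X Y)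

namespace Q

def mk {X Y : Obj} (f : Mor X Y) : Q X Y := Quotient.mk _ f

theorem sound {X Y : Obj} {f g : Mor X Y} (h : BEq f g) : mk f = mk g :=
  Quotient.sound h

theorem exact {X Y : Obj} {f g : Mor X Y} (h : mk f = mk g) : BEq f g :=
  Quotient.exact h

def comp {X Y Z : Obj} : Q X Y → Q Y Z → Q X Z :=
  Quotient.map₂ Mor.comp fun _ _ h _ _ h' => BEq.comp_congr h h'

def pr {A B C D : Obj} : Q A B → Q C D → Q (A.prod C) (B.prod D) :=
  Quotient.map₂ Mor.pr fun _ _ h _ _ h' => BEq.pr_congr h h'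

def co {A B C D : Obj} : Q A B → Q C D → Q (A.coprod C) (B.coprod D) :=
  Quotient.map₂ Mor.co fun _ _ h _ _ h' => BEq.co_congr h h'

def ex {A B C D : Obj} : Q A B → Q C D → Q (B.exp C) (A.exp D) :=
  Quotient.map₂ Mor.ex fun _ _ h _ _ h' => BEq.ex_congr h h'

@[simp] theorem mk_comp {X Y Z : Obj} (f : Mor X Y) (g : Mor Y Z) :
    mk (f.comp g) = (mk f).comp (mk g) := rfl

@[simp] theorem mk_pr {A B C D : Obj} (f : Mor A B) (g : Mor C D) :
    mk (f.pr g) = (mk f).pr (mk g) := rfl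

@[simp] theorem mk_co {A B C D : Obj} (f : Mor A B) (g : Mor C D) :
    mk (f.co g) = (mk f).co (mk g) := rfl

@[simp] theorem mk_ex {A B C D : Obj} (f : Mor A B) (g : Mor C D) :
    mk (f.ex g) = (mk f).ex (mk g) := rfl

variable {A B C D E F' X Y Z W : Obj}

theorem id_comp (f : Q X Y) : (mk (Mor.id X)).comp f = f := by
  refine Quotient.inductionOn f fun a => ?_
  exact sound (BEq.id_left a)

theorem comp_id (f : Q X Y) : f.comp (mk (Mor.id Y)) = f := by
  refine Quotient.inductionOn f fun a => ?_
  exact sound (BEq.id_right a)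

theorem assoc (f : Q A B) (g : Q B C) (h : Q C D) :
    (f.comp g).comp h = f.comp (g.comp h) := by
  refine Quotient.inductionOn₃ f g h fun a b c => ?_
  exact sound (BEq.assoc a b c)

theorem pr_pr (f : Q A B) (g : Q C D) (h : Q B E) (k : Q D F') :
    (f.pr g).comp (h.pr k) = (f.comp h).pr (g.comp k) := by
  refine Quotient.inductionOn₃ f g h fun a b c => ?_
  refine Quotient.inductionOn k fun d => ?_
  exact (sound (BEq.prod_comp a c b d)).symm

theorem pr_pr' (f : Q A B) (g : Q C D) (h : Q B E) (k : Q D F') (r : Q (E.prod F') W) :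
    (f.pr g).comp ((h.pr k).comp r) = ((f.comp h).pr (g.comp k)).comp r := by
  rw [← assoc, pr_pr]

theorem pr_id : (mk (Mor.id A)).pr (mk (Mor.id B)) = mk (Mor.id (A.prod B)) :=
  sound (BEq.prod_id A B)

theorem co_co (f : Q A B) (g : Q C D) (h : Q B E) (k : Q D F') :
    (f.co g).comp (h.co k) = (f.comp h).co (g.comp k) := by
  refine Quotient.inductionOn₃ f g h fun a b c => ?_
  refine Quotient.inductionOn k fun d => ?_
  exact (sound (BEq.coprod_comp a c b d)).symm

theorem co_co' (f : Q A B) (g : Q C D) (h : Q B E) (k : Q D F') (r : Q (E.coprod F') W) :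
    (f.co g).comp ((h.co k).comp r) = ((f.comp h).co (g.comp k)).comp r := by
  rw [← assoc, co_co]

theorem co_id : (mk (Mor.id A)).co (mk (Mor.id B)) = mk (Mor.id (A.coprod B)) :=
  sound (BEq.coprod_id A B)

theorem ex_ex (g₁ : Q B C) (f₂ : Q D E) (g₂ : Q A B) (f₁ : Q E F') :
    (g₁.ex f₂).comp (g₂.ex f₁) = (g₂.comp g₁).ex (f₂.comp f₁) := by
  refine Quotient.inductionOn₃ g₁ f₂ g₂ fun a b c => ?_
  refine Quotient.inductionOn f₁ fun d => ?_
  exact (sound (BEq.exp_comp a c d b)).symm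

theorem ex_id : (mk (Mor.id A)).ex (mk (Mor.id B)) = mk (Mor.id (A.exp B)) :=
  sound (BEq.exp_id A B)

theorem eps1 (f : Q A B) :
    (mk (Mor.ev C A)).comp f
      = ((mk (Mor.id C)).pr ((mk (Mor.id C)).ex f)).comp (mk (Mor.ev C B)) := by
  refine Quotient.inductionOn f fun a => ?_
  exact sound (BEq.eps1 a)

theorem eps2 (f : Q A B) :
    (f.pr ((mk (Mor.id B)).ex (mk (Mor.id C)))).comp (mk (Mor.ev B C))
      = ((mk (Mor.id A)).pr (f.ex (mk (Mor.id C)))).comp (mk (Mor.ev A C)) := by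
  refine Quotient.inductionOn f fun a => ?_
  exact sound (BEq.eps2 a)

theorem eta1 (f : Q A B) :
    (mk (Mor.coev C A)).comp ((mk (Mor.id C)).ex ((mk (Mor.id C)).pr f))
      = f.comp (mk (Mor.coev C B)) := by
  refine Quotient.inductionOn f fun a => ?_
  exact sound (BEq.eta1 a)

theorem eta2 (f : Q A B) :
    (mk (Mor.coev B C)).comp (f.ex ((mk (Mor.id B)).pr (mk (Mor.id C))))
      = (mk (Mor.coev A C)).comp ((mk (Mor.id A)).ex (f.pr (mk (Mor.id C)))) := by
  refine Quotient.inductionOn f fun a => ?_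
  exact sound (BEq.eta2 a)

theorem tri2 : ((mk (Mor.id A)).pr (mk (Mor.coev A B))).comp (mk (Mor.ev A (A.prod B)))
    = mk (Mor.id (A.prod B)) :=
  sound (BEq.triangle2 A B)

theorem c_nat (f : Q A C) (g : Q B D) :
    (mk (Mor.braid A B)).comp (g.pr f) = (f.pr g).comp (mk (Mor.braid C D)) := by
  refine Quotient.inductionOn₂ f g fun a b => ?_
  exact sound (BEq.c_nat a b)

theorem c_c : (mk (Mor.braid A B)).comp (mk (Mor.braid B A)) = mk (Mor.id (A.prod B)) :=
  sound (BEq.c_c A B)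

theorem inl_nat (f : Q A B) (g : Q C D) :
    (mk (Mor.inl A C)).comp (f.co g) = f.comp (mk (Mor.inl B D)) := by
  refine Quotient.inductionOn₂ f g fun a b => ?_
  exact sound (BEq.inl_nat a b)

theorem inr_nat (f : Q A B) (g : Q C D) :
    (mk (Mor.inr A C)).comp (f.co g) = g.comp (mk (Mor.inr B D)) := by
  refine Quotient.inductionOn₂ f g fun a b => ?_
  exact sound (BEq.inr_nat a b)

theorem m_nat (f : Q A B) :
    (mk (Mor.codiag A)).comp f = (f.co f).comp (mk (Mor.codiag B)) := by
  refine Quotient.inductionOn f fun a => ?_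
  exact sound (BEq.m_nat a)

theorem m_inl : (mk (Mor.inl A A)).comp (mk (Mor.codiag A)) = mk (Mor.id A) :=
  sound (BEq.m_inl A)

theorem m_inr : (mk (Mor.inr A A)).comp (mk (Mor.codiag A)) = mk (Mor.id A) :=
  sound (BEq.m_inr A)

theorem bang_unique (f : Q A Obj.unit) : f = mk (Mor.bang A) := by
  refine Quotient.inductionOn f fun a => ?_
  exact sound (BEq.k_unique a)

theorem exf_unique (f : Q Obj.zero A) : f = mk (Mor.exf A) := by
  refine Quotient.inductionOn f fun a => ?_
  exact sound (BEq.exf_unique a)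

end Q

namespace Q

variable {A B C D E F' X Y Z Z' W : Obj}

theorem pr_split (f : Q A B) (g : Q C D) :
    f.pr g = (f.pr (mk (Mor.id C))).comp ((mk (Mor.id B)).pr g) := by
  rw [pr_pr, comp_id, id_comp]

theorem pr_split' (f : Q A B) (g : Q C D) :
    f.pr g = ((mk (Mor.id A)).pr g).comp (f.pr (mk (Mor.id D))) := by
  rw [pr_pr, comp_id, id_comp]

theorem ex_id_comp (u : Q C D) (v : Q D E) :
    (mk (Mor.id A)).ex (u.comp v) = ((mk (Mor.id A)).ex u).comp ((mk (Mor.id A)).ex v) := by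
  rw [ex_ex, id_comp]

theorem eps2' (g : Q Z W) (E : Obj) :
    (g.pr (mk (Mor.id (W.exp E)))).comp (mk (Mor.ev W E))
      = ((mk (Mor.id Z)).pr (g.ex (mk (Mor.id E)))).comp (mk (Mor.ev Z E)) := by
  have h := eps2 (C := E) g
  rw [ex_id] at h
  exact h

theorem eta2' (g : Q Z W) (X : Obj) :
    (mk (Mor.coev W X)).comp (g.ex (mk (Mor.id (W.prod X))))
      = (mk (Mor.coev Z X)).comp ((mk (Mor.id Z)).ex (g.pr (mk (Mor.id X)))) := by
  have h := eta2 (C := X) g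
  rw [pr_id] at h
  exact h

theorem uncur_cur (f : Q (X.prod Z) B) :
    ((mk (Mor.id X)).pr ((mk (Mor.coev X Z)).comp ((mk (Mor.id X)).ex f))).comp
      (mk (Mor.ev X B)) = f := by
  have h1 : (mk (Mor.id X)).pr ((mk (Mor.coev X Z)).comp ((mk (Mor.id X)).ex f))
      = ((mk (Mor.id X)).pr (mk (Mor.coev X Z))).comp
          ((mk (Mor.id X)).pr ((mk (Mor.id X)).ex f)) := by
    rw [pr_pr, id_comp]
  rw [h1, assoc, ← eps1, ← assoc, tri2, id_comp]

theorem inl_codiag (u : Q X W) (v : Q Y W) :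
    (mk (Mor.inl X Y)).comp ((u.co v).comp (mk (Mor.codiag W))) = u := by
  rw [← assoc, inl_nat, assoc, m_inl, comp_id]

theorem inr_codiag (u : Q X W) (v : Q Y W) :
    (mk (Mor.inr X Y)).comp ((u.co v).comp (mk (Mor.codiag W))) = v := by
  rw [← assoc, inr_nat, assoc, m_inr, comp_id]

theorem xi_inl :
    ((mk (Mor.id Z)).pr (mk (Mor.inl X Y))).comp (mk (xiM Z X Y))
      = mk (Mor.inl (Z.prod X) (Z.prod Y)) := by
  simp only [xiM, mk_comp, mk_pr, mk_co, mk_ex]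
  rw [pr_pr', id_comp, inl_codiag]
  exact uncur_cur _

theorem xi_inr :
    ((mk (Mor.id Z)).pr (mk (Mor.inr X Y))).comp (mk (xiM Z X Y))
      = mk (Mor.inr (Z.prod X) (Z.prod Y)) := by
  simp only [xiM, mk_comp, mk_pr, mk_co, mk_ex]
  rw [pr_pr', id_comp, inr_codiag]
  exact uncur_cur _

theorem u_nat_l (g : Q Z Z') (X Y : Obj) :
    ((mk (Mor.coev Z' X)).comp
        ((mk (Mor.id Z')).ex (mk (Mor.inl (Z'.prod X) (Z'.prod Y))))).comp
      (g.ex (mk (Mor.id ((Z'.prod X).coprod (Z'.prod Y)))))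
    = ((mk (Mor.coev Z X)).comp
        ((mk (Mor.id Z)).ex (mk (Mor.inl (Z.prod X) (Z.prod Y))))).comp
      ((mk (Mor.id Z)).ex ((g.pr (mk (Mor.id X))).co (g.pr (mk (Mor.id Y))))) := by
  rw [assoc, ex_ex, comp_id, comp_id]
  rw [show (Q.ex g (mk (Mor.inl (Z'.prod X) (Z'.prod Y))) : Q _ _)
      = (g.ex (mk (Mor.id (Z'.prod X)))).comp
          ((mk (Mor.id Z)).ex (mk (Mor.inl (Z'.prod X) (Z'.prod Y)))) from by
    rw [ex_ex, id_comp, id_comp]]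
  rw [← assoc, eta2' g X, assoc, ← ex_id_comp, assoc, ← ex_id_comp, inl_nat]

theorem u_nat_r (g : Q Z Z') (X Y : Obj) :
    ((mk (Mor.coev Z' Y)).comp
        ((mk (Mor.id Z')).ex (mk (Mor.inr (Z'.prod X) (Z'.prod Y))))).comp
      (g.ex (mk (Mor.id ((Z'.prod X).coprod (Z'.prod Y)))))
    = ((mk (Mor.coev Z Y)).comp
        ((mk (Mor.id Z)).ex (mk (Mor.inr (Z.prod X) (Z.prod Y))))).comp
      ((mk (Mor.id Z)).ex ((g.pr (mk (Mor.id X))).co (g.pr (mk (Mor.id Y))))) := by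
  rw [assoc, ex_ex, comp_id, comp_id]
  rw [show (Q.ex g (mk (Mor.inr (Z'.prod X) (Z'.prod Y))) : Q _ _)
      = (g.ex (mk (Mor.id (Z'.prod Y)))).comp
          ((mk (Mor.id Z)).ex (mk (Mor.inr (Z'.prod X) (Z'.prod Y)))) from by
    rw [ex_ex, id_comp, id_comp]]
  rw [← assoc, eta2' g Y, assoc, ← ex_id_comp, assoc, ← ex_id_comp, inr_nat]

theorem xi_nat (g : Q Z Z') (X Y : Obj) :
    (g.pr (mk (Mor.id (X.coprod Y)))).comp (mk (xiM Z' X Y))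
      = (mk (xiM Z X Y)).comp ((g.pr (mk (Mor.id X))).co (g.pr (mk (Mor.id Y)))) := by
  simp only [xiM, mk_comp, mk_pr, mk_co, mk_ex]
  rw [pr_pr', comp_id, id_comp]
  conv_lhs => rw [pr_split', assoc, eps2' g, ← assoc, pr_pr, id_comp]
  conv_rhs => rw [assoc, eps1, ← assoc, pr_pr, id_comp]
  -- remains: components of the pr differ by the Φ-part
  congr 2
  -- Φ' ⬝ ex g 1 = Φ ⬝ ex 1 cc
  rw [assoc, assoc]
  rw [show ((mk (Mor.codiag (Z'.exp ((Z'.prod X).coprod (Z'.prod Y))))).comp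
        (g.ex (mk (Mor.id ((Z'.prod X).coprod (Z'.prod Y))))) : Q _ _)
      = ((g.ex (mk (Mor.id _))).co (g.ex (mk (Mor.id _)))).comp
          (mk (Mor.codiag (Z.exp ((Z'.prod X).coprod (Z'.prod Y))))) from m_nat _]
  rw [show ((mk (Mor.codiag (Z.exp ((Z.prod X).coprod (Z.prod Y))))).comp
        ((mk (Mor.id Z)).ex ((g.pr (mk (Mor.id X))).co (g.pr (mk (Mor.id Y))))) : Q _ _)
      = (((mk (Mor.id Z)).ex ((g.pr (mk (Mor.id X))).co (g.pr (mk (Mor.id Y))))).co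
          ((mk (Mor.id Z)).ex ((g.pr (mk (Mor.id X))).co (g.pr (mk (Mor.id Y)))))).comp
          (mk (Mor.codiag _)) from m_nat _]
  rw [co_co', co_co', u_nat_l g X Y, u_nat_r g X Y]

end Q

namespace Q

variable {A B C D E X Y Z Z' W : Obj}

/-- β-reduction for `(∗)` against `(▷)`. -/
theorem tri_star {D A B₁ B₂ : Obj} (p : Q (B₁.prod A) B₂) (q : Q D B₁) :
    ((mk (Mor.id D)).pr ((mk (Mor.coev B₁ A)).comp ((mk (Mor.id B₁)).ex p))).comp
      ((q.pr (mk (Mor.id (B₁.exp B₂)))).comp (mk (Mor.ev B₁ B₂)))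
    = (q.pr (mk (Mor.id A))).comp p := by
  rw [pr_pr', id_comp, comp_id]
  rw [show (Q.pr q ((mk (Mor.coev B₁ A)).comp ((mk (Mor.id B₁)).ex p)) : Q _ _)
      = (q.pr (mk (Mor.id A))).comp
          ((mk (Mor.id B₁)).pr ((mk (Mor.coev B₁ A)).comp ((mk (Mor.id B₁)).ex p)))
      from by rw [pr_pr, comp_id, id_comp]]
  rw [assoc, uncur_cur]

theorem orE_resolve_l (p' : Q (X.prod Z) W) (p'' : Q (Y.prod Z) W) :
    ((mk (Mor.inl X Y)).pr (mk (Mor.id Z))).comp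
      ((mk (Mor.braid (X.coprod Y) Z)).comp ((mk (xiM Z X Y)).comp
        (((mk (Mor.braid Z X)).co (mk (Mor.braid Z Y))).comp
          ((p'.co p'').comp (mk (Mor.codiag W))))))
    = p' := by
  rw [← assoc, ← c_nat, assoc]
  rw [← assoc ((mk (Mor.id Z)).pr (mk (Mor.inl X Y))) (mk (xiM Z X Y)), xi_inl]
  rw [← assoc (mk (Mor.inl (Z.prod X) (Z.prod Y))), inl_nat, assoc, inl_codiag]
  rw [← assoc, c_c, id_comp]

theorem orE_resolve_r (p' : Q (X.prod Z) W) (p'' : Q (Y.prod Z) W) :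
    ((mk (Mor.inr X Y)).pr (mk (Mor.id Z))).comp
      ((mk (Mor.braid (X.coprod Y) Z)).comp ((mk (xiM Z X Y)).comp
        (((mk (Mor.braid Z X)).co (mk (Mor.braid Z Y))).comp
          ((p'.co p'').comp (mk (Mor.codiag W))))))
    = p'' := by
  rw [← assoc, ← c_nat, assoc]
  rw [← assoc ((mk (Mor.id Z)).pr (mk (Mor.inr X Y))) (mk (xiM Z X Y)), xi_inr]
  rw [← assoc (mk (Mor.inr (Z.prod X) (Z.prod Y))), inr_nat, assoc, inr_codiag]
  rw [← assoc, c_c, id_comp]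

theorem orE_nat (g : Q Z Z') (p' : Q (X.prod Z') W) (p'' : Q (Y.prod Z') W) :
    ((mk (Mor.id (X.coprod Y))).pr g).comp
      ((mk (Mor.braid (X.coprod Y) Z')).comp ((mk (xiM Z' X Y)).comp
        (((mk (Mor.braid Z' X)).co (mk (Mor.braid Z' Y))).comp
          ((p'.co p'').comp (mk (Mor.codiag W))))))
    = (mk (Mor.braid (X.coprod Y) Z)).comp ((mk (xiM Z X Y)).comp
        (((mk (Mor.braid Z X)).co (mk (Mor.braid Z Y))).comp
          (((((mk (Mor.id X)).pr g).comp p').co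
              (((mk (Mor.id Y)).pr g).comp p'')).comp
            (mk (Mor.codiag W))))) := by
  rw [← assoc, ← c_nat, assoc]
  rw [← assoc (Q.pr g (mk (Mor.id (X.coprod Y)))) (mk (xiM Z' X Y)), xi_nat g X Y, assoc]
  rw [co_co', co_co']
  rw [show ((Q.pr g (mk (Mor.id X))).comp (mk (Mor.braid Z' X)) : Q _ _)
      = (mk (Mor.braid Z X)).comp ((mk (Mor.id X)).pr g) from (c_nat g (mk (Mor.id X))).symm]
  rw [show ((Q.pr g (mk (Mor.id Y))).comp (mk (Mor.braid Z' Y)) : Q _ _)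
      = (mk (Mor.braid Z Y)).comp ((mk (Mor.id Y)).pr g) from (c_nat g (mk (Mor.id Y))).symm]
  rw [assoc ((mk (Mor.braid Z X)) : Q _ _), assoc ((mk (Mor.braid Z Y)) : Q _ _)]
  conv_rhs => rw [co_co']

end Q

/-! ### `mapCtx` lemmas -/

theorem mapCtx_id (G : Ctx) (X : Fml) :
    BEq (mapCtx G (Mor.id (tF X))) (Mor.id (tF (G.fill X))) := by
  induction G with
  | box => exact BEq.refl _
  | conL G A ih => exact (BEq.pr_congr ih (BEq.refl _)).trans (BEq.prod_id _ _)
  | conR A G ih => exact (BEq.pr_congr (BEq.refl _) ih).trans (BEq.prod_id _ _)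
  | conB G H ihG ihH => exact (BEq.pr_congr ihG ihH).trans (BEq.prod_id _ _)

theorem mapCtx_comp (G : Ctx) {X Y Z : Fml} (u : Mor (tF X) (tF Y)) (v : Mor (tF Y) (tF Z)) :
    BEq (mapCtx G (u.comp v)) ((mapCtx G u).comp (mapCtx G v)) := by
  induction G with
  | box => exact BEq.refl _
  | conL G A ih => exact (BEq.pr_congr ih (BEq.id_left _).symm).trans (BEq.prod_comp _ _ _ _)
  | conR A G ih => exact (BEq.pr_congr (BEq.id_left _).symm ih).trans (BEq.prod_comp _ _ _ _)
  | conB G H ihG ihH => exact (BEq.pr_congr ihG ihH).trans (BEq.prod_comp _ _ _ _)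

theorem mapCtx_congr (G : Ctx) {X Y : Fml} {u v : Mor (tF X) (tF Y)} (h : BEq u v) :
    BEq (mapCtx G u) (mapCtx G v) := by
  induction G with
  | box => exact h
  | conL G A ih => exact BEq.pr_congr ih (BEq.refl _)
  | conR A G ih => exact BEq.pr_congr (BEq.refl _) ih
  | conB G H ihG ihH => exact BEq.pr_congr ihG ihH

theorem qmapCtx_id (G : Ctx) (X : Fml) :
    Q.mk (mapCtx G (Mor.id (tF X))) = Q.mk (Mor.id (tF (G.fill X))) :=
  Q.sound (mapCtx_id G X)

theorem tP_ctxAp (G : Ctx) {X Y : Fml} (π : JPf X Y) :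
    tP (ctxAp G π) = mapCtx G (tP π) := by
  induction G <;> simp [ctxAp, mapCtx, tP, *] <;> rfl

/-! ### Uniqueness of morphisms out of `G(⊥)` -/

/-- the currying (exponential transpose) of a morphism term -/
def cur {X Z B : Obj} (f : Mor (X.prod Z) B) : Mor Z (X.exp B) :=
  (Mor.coev X Z).comp (Mor.ex (Mor.id X) f)

def Uniq (X : Obj) : Prop := ∀ ⦃Y : Obj⦄ (f g : Mor X Y), BEq f g

theorem uniq_zero : Uniq Obj.zero := fun _ f g =>
  (BEq.exf_unique f).trans (BEq.exf_unique g).symm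

theorem Uniq.prodR {Z : Obj} (h : Uniq Z) (X : Obj) : Uniq (X.prod Z) := by
  intro Y f g
  apply Q.exact
  have hc : Q.mk (cur f) = Q.mk (cur g) := Q.sound (h (cur f) (cur g))
  simp only [cur, Q.mk_comp, Q.mk_ex] at hc
  rw [← Q.uncur_cur (Q.mk f), ← Q.uncur_cur (Q.mk g), hc]

theorem Uniq.prodL {Z : Obj} (h : Uniq Z) (X : Obj) : Uniq (Z.prod X) := by
  intro Y f g
  have h2 := (h.prodR X) ((Mor.braid X Z).comp f) ((Mor.braid X Z).comp g)
  have e : ∀ u : Mor (Z.prod X) Y,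
      BEq u ((Mor.braid Z X).comp ((Mor.braid X Z).comp u)) := by
    intro u
    apply Q.exact
    rw [Q.mk_comp, Q.mk_comp, ← Q.assoc, Q.c_c, Q.id_comp]
  exact (e f).trans ((BEq.comp_congr (BEq.refl _) h2).trans (e g).symm)

theorem uniq_fillBot (G : Ctx) : Uniq (tF (G.fill Fml.bot)) := by
  induction G with
  | box => exact uniq_zero
  | conL G A ih => exact ih.prodL _
  | conR A G ih => exact ih.prodR _
  | conB G H ihG _ => exact ihG.prodL _

/-! ### Heterogeneous `BEq` (for the `recast` cases) -/

def mrecast {X X' Y Y' : Obj} (hX : X = X') (hY : Y = Y') (f : Mor X Y) : Mor X' Y' :=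
  hX ▸ hY ▸ f

def HBEq {X Y X' Y' : Obj} (f : Mor X Y) (g : Mor X' Y') : Prop :=
  ∃ (hX : X = X') (hY : Y = Y'), BEq (mrecast hX hY f) g

namespace HBEq

theorem ofBEq {X Y : Obj} {f g : Mor X Y} (h : BEq f g) : HBEq f g := ⟨rfl, rfl, h⟩

theorem toBEq {X Y : Obj} {f g : Mor X Y} (h : HBEq f g) : BEq f g := by
  obtain ⟨hX, hY, hb⟩ := h
  exact hb

theorem symm {X Y X' Y' : Obj} {f : Mor X Y} {g : Mor X' Y'} (h : HBEq f g) : HBEq g f := by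
  obtain ⟨rfl, rfl, hb⟩ := h
  exact ⟨rfl, rfl, hb.symm⟩

theorem trans {X Y X' Y' X'' Y'' : Obj} {f : Mor X Y} {g : Mor X' Y'} {h : Mor X'' Y''}
    (h1 : HBEq f g) (h2 : HBEq g h) : HBEq f h := by
  obtain ⟨rfl, rfl, hb1⟩ := h1
  obtain ⟨rfl, rfl, hb2⟩ := h2
  exact ⟨rfl, rfl, hb1.trans hb2⟩

theorem comp {X Y Z X' Y' Z' : Obj} {f : Mor X Y} {g : Mor Y Z} {f' : Mor X' Y'}
    {g' : Mor Y' Z'} (h1 : HBEq f f') (h2 : HBEq g g') : HBEq (f.comp g) (f'.comp g') := by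
  obtain ⟨rfl, rfl, hb1⟩ := h1
  obtain ⟨hY, rfl, hb2⟩ := h2
  exact ⟨rfl, rfl, hb1.comp_congr hb2⟩

theorem prc {X Y X' Y' Z W Z' W' : Obj} {f : Mor X Y} {g : Mor Z W} {f' : Mor X' Y'}
    {g' : Mor Z' W'} (h1 : HBEq f f') (h2 : HBEq g g') : HBEq (f.pr g) (f'.pr g') := by
  obtain ⟨rfl, rfl, hb1⟩ := h1
  obtain ⟨rfl, rfl, hb2⟩ := h2
  exact ⟨rfl, rfl, hb1.pr_congr hb2⟩

end HBEq

theorem tP_recast {A A' B B' : Fml} (hA : A = A') (hB : B = B') (π : JPf A B) :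
    HBEq (tP (recast hA hB π)) (tP π) := by
  subst hA; subst hB
  exact HBEq.ofBEq (BEq.refl _)

theorem mapCtx_subst_hbeq (G K : Ctx) {X Y : Fml} (f : Mor (tF X) (tF Y)) :
    HBEq (mapCtx (G.subst K) f) (mapCtx G (mapCtx K f)) := by
  induction G with
  | box => exact HBEq.ofBEq (BEq.refl _)
  | conL G A ih => exact HBEq.prc ih (HBEq.ofBEq (BEq.refl _))
  | conR A G ih => exact HBEq.prc (HBEq.ofBEq (BEq.refl _)) ih
  | conB G H ihG ihH => exact HBEq.prc ihG ihH

theorem qmapCtx_comp (G : Ctx) {X Y Z : Fml} (u : Mor (tF X) (tF Y)) (v : Mor (tF Y) (tF Z)) :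
    Q.mk (mapCtx G (u.comp v)) = (Q.mk (mapCtx G u)).comp (Q.mk (mapCtx G v)) :=
  Q.sound (mapCtx_comp G u v)

namespace Q

/-- β-reduction for `(∗)` against `(▷)`, normalized form. -/
theorem tri_star' {D A B₁ B₂ : Obj} (p : Q (B₁.prod A) B₂) (q : Q D B₁) :
    (q.pr ((mk (Mor.coev B₁ A)).comp ((mk (Mor.id B₁)).ex p))).comp (mk (Mor.ev B₁ B₂))
      = (q.pr (mk (Mor.id A))).comp p := by
  rw [pr_split q, assoc, uncur_cur]

end Q

namespace Q

theorem orE_beta_l {U X Y Z W : Obj} (a : Q U X) (p' : Q (X.prod Z) W) (p'' : Q (Y.prod Z) W) :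
    ((a.comp (mk (Mor.inl X Y))).pr (mk (Mor.id Z))).comp
      ((mk (Mor.braid (X.coprod Y) Z)).comp ((mk (xiM Z X Y)).comp
        (((mk (Mor.braid Z X)).co (mk (Mor.braid Z Y))).comp
          ((p'.co p'').comp (mk (Mor.codiag W))))))
    = (a.pr (mk (Mor.id Z))).comp p' := by
  rw [show ((a.comp (mk (Mor.inl X Y))).pr (mk (Mor.id Z)) : Q _ _)
      = (a.pr (mk (Mor.id Z))).comp ((mk (Mor.inl X Y)).pr (mk (Mor.id Z))) from by
    rw [pr_pr, id_comp]]
  rw [assoc, orE_resolve_l]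

theorem orE_beta_r {U X Y Z W : Obj} (a : Q U Y) (p' : Q (X.prod Z) W) (p'' : Q (Y.prod Z) W) :
    ((a.comp (mk (Mor.inr X Y))).pr (mk (Mor.id Z))).comp
      ((mk (Mor.braid (X.coprod Y) Z)).comp ((mk (xiM Z X Y)).comp
        (((mk (Mor.braid Z X)).co (mk (Mor.braid Z Y))).comp
          ((p'.co p'').comp (mk (Mor.codiag W))))))
    = (a.pr (mk (Mor.id Z))).comp p'' := by
  rw [show ((a.comp (mk (Mor.inr X Y))).pr (mk (Mor.id Z)) : Q _ _)
      = (a.pr (mk (Mor.id Z))).comp ((mk (Mor.inr X Y)).pr (mk (Mor.id Z))) from by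
    rw [pr_pr, id_comp]]
  rw [assoc, orE_resolve_r]

theorem orE_nat2 {U X Y Z Z' W : Obj} (F : Q U (X.coprod Y)) (g : Q Z Z')
    (p' : Q (X.prod Z') W) (p'' : Q (Y.prod Z') W) :
    (F.pr g).comp
      ((mk (Mor.braid (X.coprod Y) Z')).comp ((mk (xiM Z' X Y)).comp
        (((mk (Mor.braid Z' X)).co (mk (Mor.braid Z' Y))).comp
          ((p'.co p'').comp (mk (Mor.codiag W))))))
    = (F.pr (mk (Mor.id Z))).comp
      ((mk (Mor.braid (X.coprod Y) Z)).comp ((mk (xiM Z X Y)).comp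
        (((mk (Mor.braid Z X)).co (mk (Mor.braid Z Y))).comp
          (((((mk (Mor.id X)).pr g).comp p').co
              (((mk (Mor.id Y)).pr g).comp p'')).comp
            (mk (Mor.codiag W)))))) := by
  rw [pr_split F g, assoc, orE_nat]

end Q

/-- Lemma 5.15 of the paper.  Each step of the mix-elimination
procedure for the sequent system `𝒥` preserves the translation `t` into the free
bicartesian closed category `ℬ`: if a proof `π` is transformed into a proof `π′` by
one reduction step of the procedure, then `t(π) = t(π′)` holds in `ℬ`. -/
theorem elimStep_preserves_t {A B : Fml} (π π' : JPf A B) (h : ElimStep π π') :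
    BEq (tP π) (tP π') := by
  cases h with
  | e111 G π₂ =>
      apply Q.exact
      simp only [tP, Q.mk_comp]
      rw [qmapCtx_id, Q.id_comp]
  | e112 G π₁ =>
      apply Q.exact
      simp only [tP, Q.mk_comp]
      rw [tP_ctxAp, Q.comp_id]
  | e113 G π₂ =>
      exact uniq_fillBot G _ _
  | e114 π₁ =>
      exact uniq_zero _ _
  | @e12 A₁ A₂ B₁ B₂ C G π₁' π₁'' π₂ =>
      have hC : G.fill (B₁.and B₂) = (G.subst (Ctx.conR B₁ Ctx.box)).fill B₂ := by
        simp [Ctx.subst_fill, Ctx.fill]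
      have hB : (G.subst (Ctx.conR B₁ Ctx.box)).fill A₂
          = (G.subst (Ctx.conL Ctx.box A₂)).fill B₁ := by
        simp [Ctx.subst_fill, Ctx.fill]
      have s1 : HBEq (tP (recast hC rfl π₂)) (tP π₂) := tP_recast hC rfl π₂
      have s2 : HBEq (tP (JPf.mix (G.subst (Ctx.conR B₁ Ctx.box)) π₁'' (recast hC rfl π₂)))
          ((mapCtx G (mapCtx (Ctx.conR B₁ Ctx.box) (tP π₁''))).comp (tP π₂)) :=
        HBEq.comp (mapCtx_subst_hbeq G _ (tP π₁'')) s1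
      have s3 : HBEq (tP (recast hB rfl
            (JPf.mix (G.subst (Ctx.conR B₁ Ctx.box)) π₁'' (recast hC rfl π₂))))
          ((mapCtx G (mapCtx (Ctx.conR B₁ Ctx.box) (tP π₁''))).comp (tP π₂)) :=
        (tP_recast hB rfl _).trans s2
      have s4 : HBEq (tP (JPf.mix (G.subst (Ctx.conL Ctx.box A₂)) π₁'
            (recast hB rfl
              (JPf.mix (G.subst (Ctx.conR B₁ Ctx.box)) π₁'' (recast hC rfl π₂)))))
          ((mapCtx G (mapCtx (Ctx.conL Ctx.box A₂) (tP π₁'))).comp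
            ((mapCtx G (mapCtx (Ctx.conR B₁ Ctx.box) (tP π₁''))).comp (tP π₂))) :=
        HBEq.comp (mapCtx_subst_hbeq G _ (tP π₁')) s3
      refine HBEq.toBEq (HBEq.trans (HBEq.ofBEq ?_) ((tP_recast _ rfl _).trans s4).symm)
      have hx : BEq (Mor.pr (tP π₁') (tP π₁''))
          ((mapCtx (Ctx.conL Ctx.box A₂) (tP π₁')).comp
            (mapCtx (Ctx.conR B₁ Ctx.box) (tP π₁''))) := by
        apply Q.exact
        show ((Q.mk (tP π₁')).pr (Q.mk (tP π₁'')))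
            = ((Q.mk (tP π₁')).pr (Q.mk (Mor.id (tF A₂)))).comp
                ((Q.mk (Mor.id (tF B₁))).pr (Q.mk (tP π₁'')))
        rw [Q.pr_pr, Q.comp_id, Q.id_comp]
      apply Q.exact
      show (Q.mk (mapCtx G (X := A₁.and A₂) (Y := B₁.and B₂)
            (Mor.pr (tP π₁') (tP π₁'')))).comp (Q.mk (tP π₂))
          = (Q.mk (mapCtx G (mapCtx (Ctx.conL Ctx.box A₂) (tP π₁')))).comp
              ((Q.mk (mapCtx G (mapCtx (Ctx.conR B₁ Ctx.box) (tP π₁'')))).comp (Q.mk (tP π₂)))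
      erw [← Q.assoc, ← qmapCtx_comp,
        Q.sound (mapCtx_congr (X := A₁.and A₂) (Y := B₁.and B₂) G hx)]
      rfl
  | e131 F G₁ hF π₁ π₂' =>
      refine HBEq.toBEq
        (HBEq.trans (HBEq.comp (mapCtx_subst_hbeq F G₁ (tP π₁)) (tP_recast _ rfl _))
          (HBEq.trans (HBEq.ofBEq ?_) (tP_recast _ rfl _).symm))
      apply Q.exact
      simp only [tP, Q.mk_comp]
      erw [← Q.assoc, ← qmapCtx_comp]
      erw [Q.sound (mapCtx_congr F
        (BEq.k_unique ((mapCtx G₁ (tP π₁)).comp (Mor.bang _))))]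
  | e132 π₁' π₂' π₂'' =>
      apply Q.exact
      simp only [tP, mapCtx, tF, Ctx.fill, Q.mk_comp, Q.mk_pr, Q.mk_ex]
      generalize tP π₁' = p1
      generalize tP π₂' = p2
      generalize tP π₂'' = p3
      revert p1 p2 p3
      dsimp only [tF, Ctx.fill]
      intro p1 p2 p3
      simp only [Q.mk_comp, Q.mk_pr, Q.mk_ex]
      simp only [Q.pr_pr, Q.pr_pr', Q.assoc, Q.id_comp, Q.comp_id]
      rw [Q.tri_star']
  | e142l π₁' π₂' π₂'' =>
      apply Q.exact
      exact Q.orE_beta_l (Q.mk (tP π₁')) (Q.mk (tP π₂')) (Q.mk (tP π₂''))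
  | e142r π₁' π₂' π₂'' =>
      apply Q.exact
      exact Q.orE_beta_r (Q.mk (tP π₁')) (Q.mk (tP π₂')) (Q.mk (tP π₂''))
  | e212 G₁ G₂ π₁ π₂' π₂'' =>
      apply Q.exact
      simp only [tP, mapCtx, Q.mk_comp, Q.mk_pr]
      dsimp only [tF, Ctx.fill]
      simp only [Q.mk_comp, Q.mk_pr, Q.mk_ex]
      rw [Q.pr_pr]
  | e213 G π₁ π₂' =>
      apply Q.exact
      simp only [tP, mapCtx, Q.mk_comp, Q.mk_pr, Q.mk_ex]
      dsimp only [tF, Ctx.fill]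
      generalize tP π₁ = p1
      generalize tP π₂' = p2
      revert p1 p2
      dsimp only [tF, Ctx.fill]
      intro p1 p2
      simp only [Q.mk_comp, Q.mk_pr, Q.mk_ex]
      conv_rhs => rw [Q.ex_id_comp, ← Q.assoc, Q.eta1, Q.assoc]
  | e2141 G₁ G₂ π₁ π₂' π₂'' =>
      apply Q.exact
      simp only [tP, mapCtx, Q.mk_comp, Q.mk_pr]
      dsimp only [tF, Ctx.fill]
      generalize tP π₁ = p1
      generalize tP π₂' = p2
      generalize tP π₂'' = p3
      revert p1 p2 p3
      dsimp only [tF, Ctx.fill]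
      intro p1 p2 p3
      simp only [Q.mk_comp, Q.mk_pr, Q.mk_ex]
      simp only [Q.pr_pr, Q.pr_pr', Q.assoc, Q.id_comp, Q.comp_id]
  | e2142 G₁ π₁ π₂' π₂'' =>
      apply Q.exact
      simp only [tP, mapCtx, Q.mk_comp, Q.mk_pr]
      dsimp only [tF, Ctx.fill]
      generalize tP π₁ = p1
      generalize tP π₂' = p2
      generalize tP π₂'' = p3
      revert p1 p2 p3
      dsimp only [tF, Ctx.fill]
      intro p1 p2 p3
      simp only [Q.mk_comp, Q.mk_pr, Q.mk_ex]
      simp only [Q.pr_pr, Q.pr_pr', Q.assoc, Q.id_comp, Q.comp_id]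
  | e2143 G₁ G₂ π₁ π₂' π₂'' =>
      apply Q.exact
      simp only [tP, mapCtx, Q.mk_comp, Q.mk_pr]
      dsimp only [tF, Ctx.fill]
      generalize tP π₁ = p1
      generalize tP π₂' = p2
      generalize tP π₂'' = p3
      revert p1 p2 p3
      dsimp only [tF, Ctx.fill]
      intro p1 p2 p3
      simp only [Q.mk_comp, Q.mk_pr, Q.mk_ex]
      simp only [Q.pr_pr, Q.pr_pr', Q.assoc, Q.id_comp, Q.comp_id]
  | e2151 G₁ π₁ π₂' π₂'' =>
      apply Q.exact
      exact Q.orE_nat2 (Q.mk (tP π₁)) (Q.mk (mapCtx G₁ (tP π₁)))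
        (Q.mk (tP π₂')) (Q.mk (tP π₂''))
  | e2152 G₁ π₁ π₂' π₂'' =>
      apply Q.exact
      exact Q.orE_nat (Q.mk (mapCtx G₁ (tP π₁))) (Q.mk (tP π₂')) (Q.mk (tP π₂''))
  | e216l G π₁ π₂' =>
      apply Q.exact
      simp only [tP, Q.mk_comp]
      dsimp only [tF, Ctx.fill]
      simp only [Q.mk_comp, Q.mk_pr, Q.mk_ex]
      rw [Q.assoc]
  | e216r G π₁ π₂' =>
      apply Q.exact
      simp only [tP, Q.mk_comp]
      dsimp only [tF, Ctx.fill]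
      simp only [Q.mk_comp, Q.mk_pr, Q.mk_ex]
      rw [Q.assoc]
end JSys
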